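/- arXiv:1010.1386 — 4 statements merged into one kernel-verified Lean document; each statement's English description precedes it below -/
import Mathlib

section
/- If |p'(m)| - K·∑_{k≥1} |p^{(k+1)}(m)/k!|·r^k > 0 for some real K ≥ √2, then the closed disc of radius r centered at m ∈ ℝ contains at most one root of the polynomial p (counted without multiplicity, i.e., p has at most one root in the disc). -/
open Polynomial

theorem disc_contains_at_most_one_root (p : Polynomial ℝ) (m r K : ℝ) (hr : 0 < r)
    (hK : Real.sqrt 2 ≤ K)
    (hT : |(Polynomial.derivative p).eval m| -
      K * ∑ k ∈ Finset.Icc 1 (Polynomial.derivative p).natDegree,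
        |((Polynomial.derivative^[k] (Polynomial.derivative p)).eval m)| / (Nat.factorial k : ℝ)
          * r ^ k > 0) :
    ∀ z₁ z₂ : ℂ, ‖z₁ - m‖ ≤ r → ‖z₂ - m‖ ≤ r →
      (p.map (algebraMap ℝ ℂ)).eval z₁ = 0 → (p.map (algebraMap ℝ ℂ)).eval z₂ = 0 →
      z₁ = z₂ := by
  intro z₁ z₂ hz₁ hz₂ hp₁ hp₂
  by_contra hne
  set n := (Polynomial.derivative p).natDegree with hn
  set S := ∑ k ∈ Finset.Icc 1 n,
      |((Polynomial.derivative^[k] (Polynomial.derivative p)).eval m)| / (Nat.factorial k : ℝ)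
        * r ^ k with hS
  have hSnonneg : 0 ≤ S := by
    apply Finset.sum_nonneg
    intro k _
    positivity
  have hK1 : (1 : ℝ) ≤ K := by
    have h2 : (1 : ℝ) ≤ Real.sqrt 2 := by
      rw [show (1:ℝ) = Real.sqrt 1 by simp]
      exact Real.sqrt_le_sqrt (by norm_num)
    linarith
  have hd : 0 < |(Polynomial.derivative p).eval m| := by
    nlinarith [mul_nonneg (by linarith : (0:ℝ) ≤ K) hSnonneg]
  -- the degree of p
  have hpd : p.natDegree ≠ 0 := by
    intro h
    rw [Polynomial.eq_C_of_natDegree_eq_zero h] at hd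
    simp at hd
  have hdeg : p.natDegree = n + 1 := by
    have h1 : (Polynomial.derivative p).degree = ((p.natDegree - 1 : ℕ) : WithBot ℕ) :=
      Polynomial.degree_derivative_eq p (Nat.pos_of_ne_zero hpd)
    have h2 : n = p.natDegree - 1 := by
      rw [hn]
      exact Polynomial.natDegree_eq_of_degree_eq_some h1
    omega
  -- Taylor coefficients
  set c : ℕ → ℝ := fun k => (Polynomial.taylor m p).coeff k with hc
  have hck : ∀ k : ℕ, (Nat.factorial k : ℝ) * c k = (Polynomial.derivative^[k] p).eval m := by
    intro k
    have h2 : ((Nat.factorial k) • Polynomial.hasseDeriv k p : ℝ[X])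
        = Polynomial.derivative^[k] p := by
      have := congrFun (Polynomial.factorial_smul_hasseDeriv (R := ℝ) (k := k)) p
      simpa using this
    rw [← h2]
    simp [hc, Polynomial.taylor_coeff, nsmul_eq_mul, mul_comm]
  have habs : ∀ k : ℕ, |c k| = |(Polynomial.derivative^[k] p).eval m| / (Nat.factorial k : ℝ) := by
    intro k
    rw [← hck k, abs_mul, Nat.abs_cast]
    field_simp [Nat.factorial_ne_zero]
  -- taylor commutes with the map to ℂ
  have hmapt : Polynomial.taylor ((m : ℂ)) (p.map (algebraMap ℝ ℂ))
      = (Polynomial.taylor m p).map (algebraMap ℝ ℂ) := by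
    simp only [Polynomial.taylor_apply, Polynomial.map_comp, Polynomial.map_add,
      Polynomial.map_X, Polynomial.map_C]
    norm_num [Complex.coe_algebraMap]
  -- evaluation formula
  have key : ∀ z : ℂ, (p.map (algebraMap ℝ ℂ)).eval z
      = ∑ k ∈ Finset.range (n + 2), ((c k : ℂ)) * (z - m) ^ k := by
    intro z
    have hdlt : (Polynomial.taylor ((m : ℂ)) (p.map (algebraMap ℝ ℂ))).natDegree < n + 2 := by
      rw [Polynomial.natDegree_taylor]
      exact lt_of_le_of_lt (Polynomial.natDegree_map_le) (by omega)
    have h1 : (p.map (algebraMap ℝ ℂ)).eval z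
        = (Polynomial.taylor ((m : ℂ)) (p.map (algebraMap ℝ ℂ))).eval (z - m) := by
      rw [Polynomial.taylor_apply, Polynomial.eval_comp]
      simp
    rw [h1, Polynomial.eval_eq_sum_range' hdlt]
    refine Finset.sum_congr rfl fun k _ => ?_
    congr 1
    rw [hmapt, Polynomial.coeff_map]
    simp [hc, Complex.coe_algebraMap]
  -- the two roots give a vanishing sum
  set x : ℂ := z₁ - m with hx
  set y : ℂ := z₂ - m with hy
  have h0 : ∑ k ∈ Finset.range (n + 2), ((c k : ℂ)) * (x ^ k - y ^ k) = 0 := by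
    have := key z₁
    have := key z₂
    calc ∑ k ∈ Finset.range (n + 2), ((c k : ℂ)) * (x ^ k - y ^ k)
        = (∑ k ∈ Finset.range (n + 2), ((c k : ℂ)) * x ^ k)
          - ∑ k ∈ Finset.range (n + 2), ((c k : ℂ)) * y ^ k := by
          rw [← Finset.sum_sub_distrib]
          exact Finset.sum_congr rfl fun k _ => by ring
      _ = (p.map (algebraMap ℝ ℂ)).eval z₁ - (p.map (algebraMap ℝ ℂ)).eval z₂ := by
          rw [key z₁, key z₂]
      _ = 0 := by rw [hp₁, hp₂, sub_zero]
  have h1 : (∑ k ∈ Finset.range (n + 2),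
      ((c k : ℂ)) * ∑ i ∈ Finset.range k, x ^ i * y ^ (k - 1 - i)) * (x - y) = 0 := by
    rw [Finset.sum_mul, ← h0]
    refine Finset.sum_congr rfl fun k _ => ?_
    rw [mul_assoc, geom_sum₂_mul]
  have hxy : x - y ≠ 0 := sub_ne_zero.mpr (by simpa [hx, hy, sub_eq_sub_iff_sub_eq_sub] using hne)
  have h2 : ∑ k ∈ Finset.range (n + 2),
      ((c k : ℂ)) * ∑ i ∈ Finset.range k, x ^ i * y ^ (k - 1 - i) = 0 := by
    rcases mul_eq_zero.mp h1 with h | h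
    · exact h
    · exact absurd h hxy
  -- peel off the first two terms
  have h3 : ((c 1 : ℂ)) = -∑ i ∈ Finset.range n,
      ((c (i + 1 + 1) : ℂ)) * ∑ j ∈ Finset.range (i + 1 + 1), x ^ j * y ^ (i + 1 - j) := by
    rw [Finset.sum_range_succ' _ (n + 1), Finset.sum_range_succ' _ n] at h2
    norm_num [Finset.sum_range_one] at h2
    linear_combination h2
  -- bound |c 1|
  have hxr : ‖x‖ ≤ r := hz₁
  have hyr : ‖y‖ ≤ r := hz₂
  have hSb : ∀ i : ℕ, ‖∑ j ∈ Finset.range (i + 1 + 1), x ^ j * y ^ (i + 1 - j)‖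
      ≤ (i + 2 : ℝ) * r ^ (i + 1) := by
    intro i
    calc ‖∑ j ∈ Finset.range (i + 1 + 1), x ^ j * y ^ (i + 1 - j)‖
        ≤ ∑ j ∈ Finset.range (i + 1 + 1), ‖x ^ j * y ^ (i + 1 - j)‖ :=
          norm_sum_le _ _
      _ ≤ ∑ j ∈ Finset.range (i + 1 + 1), r ^ (i + 1) := by
          refine Finset.sum_le_sum fun j hj => ?_
          rw [Finset.mem_range] at hj
          rw [norm_mul, norm_pow, norm_pow]
          have h1 : ‖x‖ ^ j ≤ r ^ j :=
            pow_le_pow_left₀ (norm_nonneg x) hxr j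
          have h2 : ‖y‖ ^ (i + 1 - j) ≤ r ^ (i + 1 - j) :=
            pow_le_pow_left₀ (norm_nonneg y) hyr _
          calc ‖x‖ ^ j * ‖y‖ ^ (i + 1 - j) ≤ r ^ j * r ^ (i + 1 - j) :=
                mul_le_mul h1 h2 (by positivity) (by positivity)
            _ = r ^ (i + 1) := by
                rw [← pow_add]
                congr 1
                omega
      _ = (i + 2 : ℝ) * r ^ (i + 1) := by
          rw [Finset.sum_const, Finset.card_range]
          push_cast
          ring
  have hbound : |c 1| ≤ ∑ i ∈ Finset.range n, |c (i + 1 + 1)| * ((i + 2 : ℝ) * r ^ (i + 1)) := by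
    calc |c 1| = ‖(c 1 : ℂ)‖ := (Complex.norm_real _).symm
      _ = ‖∑ i ∈ Finset.range n,
            ((c (i + 1 + 1) : ℂ)) * ∑ j ∈ Finset.range (i + 1 + 1), x ^ j * y ^ (i + 1 - j)‖ := by
          rw [h3, norm_neg]
      _ ≤ ∑ i ∈ Finset.range n, ‖((c (i + 1 + 1) : ℂ)) * ∑ j ∈ Finset.range (i + 1 + 1), x ^ j * y ^ (i + 1 - j)‖ :=
          norm_sum_le _ _
      _ ≤ ∑ i ∈ Finset.range n, |c (i + 1 + 1)| * ((i + 2 : ℝ) * r ^ (i + 1)) := by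
          refine Finset.sum_le_sum fun i _ => ?_
          rw [norm_mul, Complex.norm_real, Real.norm_eq_abs]
          exact mul_le_mul_of_nonneg_left (hSb i) (abs_nonneg _)
  -- identify the sums
  have hc1 : |c 1| = |(Polynomial.derivative p).eval m| := by
    rw [habs 1]
    simp
  have hSsum : S = ∑ i ∈ Finset.range n, |c (i + 1 + 1)| * ((i + 2 : ℝ) * r ^ (i + 1)) := by
    rw [hS, show Finset.Icc 1 n = Finset.Ico 1 (n + 1) from (Finset.Ico_add_one_right_eq_Icc 1 n).symm,
      Finset.sum_Ico_eq_sum_range]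
    simp only [Nat.add_sub_cancel]
    refine Finset.sum_congr rfl fun i _ => ?_
    have hiter : Polynomial.derivative^[1 + i] (Polynomial.derivative p)
        = Polynomial.derivative^[i + 2] p := by
      rw [← Function.iterate_succ_apply]
      congr 1
      omega
    rw [hiter, habs (i + 2)]
    have hfact : (Nat.factorial (i + 2) : ℝ) = (Nat.factorial (1 + i) : ℝ) * (i + 2 : ℝ) := by
      rw [show i + 2 = (i + 1) + 1 from rfl, Nat.factorial_succ, show 1 + i = i + 1 from by omega]
      push_cast
      ring
    rw [hfact]
    have hf1 : (0:ℝ) < (Nat.factorial (1 + i) : ℝ) := by positivity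
    field_simp
    rw [show (1 : ℕ) + i = i + 1 from by omega]
  -- final contradiction
  rw [← hSsum] at hbound
  rw [hc1] at hbound
  nlinarith [mul_le_mul_of_nonneg_right hK1 hSnonneg]
end

section
/- Let R be a nonzero real polynomial of degree n, α a real root of R of multiplicity i₀, I = (a,b) an interval containing α with midpoint m and radius r = (b-a)/2, such that every root β ≠ α of R satisfies |β - m| > 8r. Then for every z on the circle |z - m| = 2r, one has |R(z)| > 2^{-i₀ - n}·|R(m - 2r)|. -/
open Polynomial

lemma mprod_lt_aux (s : Multiset ℂ) (f g : ℂ → ℝ) (hs : s ≠ 0)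
    (h0 : ∀ x ∈ s, 0 ≤ f x) (h : ∀ x ∈ s, f x < g x) :
    (s.map f).prod < (s.map g).prod := by
  induction s using Multiset.induction with
  | empty => simp at hs
  | cons a s ih =>
    rcases eq_or_ne s 0 with rfl | hs'
    · simpa using h a (by simp)
    · simp only [Multiset.map_cons, Multiset.prod_cons]
      have hfprod : 0 ≤ (s.map f).prod := by
        apply Multiset.prod_nonneg
        intro x hx
        obtain ⟨y, hy, rfl⟩ := Multiset.mem_map.mp hx
        exact h0 y (by simp [hy])
      exact mul_lt_mul'' (h a (by simp))
        (ih hs' (fun x hx => h0 x (by simp [hx])) (fun x hx => h x (by simp [hx])))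
        (h0 a (by simp)) hfprod

lemma prod_ite_count (α' : ℂ) (c d : ℝ) (s : Multiset ℂ) :
    (s.map (fun β => if β = α' then c else d)).prod
      = c ^ s.count α' * d ^ (s.card - s.count α') := by
  classical
  induction s using Multiset.induction with
  | empty => simp
  | cons a s ih =>
    by_cases h : a = α'
    · subst h
      have hle := Multiset.count_le_card a s
      simp only [Multiset.map_cons, Multiset.prod_cons, eq_self_iff_true, if_true,
        Multiset.count_cons_self, Multiset.card_cons, ih]
      rw [show s.card + 1 - (s.count a + 1) = s.card - s.count a by omega, pow_succ]
      ring
    · have hle := Multiset.count_le_card α' s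
      simp only [Multiset.map_cons, Multiset.prod_cons, if_neg h,
        Multiset.count_cons_of_ne (Ne.symm h), Multiset.card_cons, ih]
      rw [show s.card + 1 - s.count α' = (s.card - s.count α') + 1 by omega, pow_succ]
      ring

theorem resultant_lower_bound (R : Polynomial ℝ) (hR : R ≠ 0) (n i₀ : ℕ)
    (hn : n = R.natDegree) (α a b m r : ℝ)
    (hab : a < b) (hm : m = (a + b) / 2) (hr : r = (b - a) / 2)
    (hαI : a < α ∧ α < b)
    (hmult : (R.map (algebraMap ℝ ℂ)).rootMultiplicity (α : ℂ) = i₀) (hi₀ : 1 ≤ i₀)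
    (hsep : ∀ β : ℂ, (R.map (algebraMap ℝ ℂ)).eval β = 0 → β ≠ (α : ℂ) →
      ‖β - m‖ > 8 * r) :
    ∀ z : ℂ, ‖z - m‖ = 2 * r →
      ‖(R.map (algebraMap ℝ ℂ)).eval z‖ >
        (2 : ℝ) ^ (-(i₀ : ℤ) - (n : ℤ)) * |R.eval (m - 2 * r)| := by
  classical
  intro z hz
  set w : ℝ := m - 2 * r with hw
  set S : Polynomial ℂ := R.map (algebraMap ℝ ℂ) with hSdef
  have hS0 : S ≠ 0 := by
    rw [hSdef, Ne, Polynomial.map_eq_zero_iff (algebraMap ℝ ℂ).injective]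
    exact hR
  have hr0 : 0 < r := by rw [hr]; linarith
  have hdeg : S.natDegree = n := by
    rw [hSdef, Polynomial.natDegree_map_eq_of_injective (algebraMap ℝ ℂ).injective, hn]
  have hcard : S.roots.card = n := by
    rw [← hdeg]
    exact (Polynomial.splits_iff_card_roots.mp (IsAlgClosed.splits S))
  have hcount : S.roots.count (α : ℂ) = i₀ := by
    rw [Polynomial.count_roots, hmult]
  have hfact : Polynomial.C S.leadingCoeff * (S.roots.map fun a => X - Polynomial.C a).prod = S :=
    Polynomial.C_leadingCoeff_mul_prod_multiset_X_sub_C (hcard.trans hdeg.symm)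
  set t := S.roots with ht
  -- eval formulas
  have heval : ∀ u : ℂ, ‖S.eval u‖
      = ‖S.leadingCoeff‖ * (t.map fun β => ‖u - β‖).prod := by
    intro u
    conv_lhs => rw [← hfact]
    rw [Polynomial.eval_mul, Polynomial.eval_C, norm_mul, Polynomial.eval_multiset_prod,
      Multiset.map_map, show ‖(Multiset.map _ t).prod‖ = _ from map_multiset_prod (normHom : ℂ →*₀ ℝ) _]
    simp [Multiset.map_map, Function.comp]
  have hαm : |α - m| < r := by
    rw [abs_lt, hm, hr]; constructor <;> [linarith [hαI.1]; linarith [hαI.2]]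
  -- per factor bound
  set F : ℂ → ℝ := fun β => (if β = (α : ℂ) then (4 : ℝ)⁻¹ else 2⁻¹) * ‖(w : ℂ) - β‖
    with hF
  have hwm : ‖(w : ℂ) - (m : ℂ)‖ = 2 * r := by
    rw [← Complex.ofReal_sub, Complex.norm_real, Real.norm_eq_abs, hw]
    rw [abs_of_nonpos (by linarith)]; ring
  have hkey : ∀ β ∈ t, F β < ‖z - β‖ := by
    intro β hβ
    have hev : S.eval β = 0 := (Polynomial.mem_roots hS0).mp hβ
    by_cases hβα : β = (α : ℂ)
    · subst hβα
      simp only [hF, eq_self_iff_true, if_true]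
      have h1 : ‖(α : ℂ) - (m : ℂ)‖ < r := by
        rw [← Complex.ofReal_sub, Complex.norm_real, Real.norm_eq_abs]; exact hαm
      have h2 : ‖z - (m : ℂ)‖ ≤ ‖z - (α : ℂ)‖ + ‖(α : ℂ) - m‖ :=
        norm_sub_le_norm_sub_add_norm_sub z _ _
      have h3 : ‖(w : ℂ) - (α : ℂ)‖ ≤ ‖(w : ℂ) - m‖ + ‖(m : ℂ) - α‖ :=
        norm_sub_le_norm_sub_add_norm_sub _ _ _
      have h4 : ‖(m : ℂ) - (α : ℂ)‖ = ‖(α : ℂ) - m‖ :=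
        norm_sub_rev _ _
      rw [hz] at h2
      linarith
    · have hD := hsep β hev hβα
      simp only [hF, if_neg hβα]
      have h1 : ‖β - (m : ℂ)‖ ≤ ‖β - z‖ + ‖z - m‖ :=
        norm_sub_le_norm_sub_add_norm_sub _ _ _
      have h2 : ‖β - z‖ = ‖z - β‖ := norm_sub_rev _ _
      have h3 : ‖(w : ℂ) - β‖ ≤ ‖(w : ℂ) - m‖ + ‖(m : ℂ) - β‖ :=
        norm_sub_le_norm_sub_add_norm_sub _ _ _
      have h4 : ‖(m : ℂ) - β‖ = ‖β - m‖ := norm_sub_rev _ _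
      rw [hz] at h1
      rw [h2] at h1
      rw [hwm, h4] at h3
      linarith
  have hF0 : ∀ β ∈ t, 0 ≤ F β := by
    intro β _
    apply mul_nonneg _ (norm_nonneg _)
    split_ifs <;> norm_num
  have htne : t ≠ 0 := by
    intro h
    rw [h] at hcount
    simp at hcount
    omega
  have hin : i₀ ≤ n := by
    rw [← hcount, ← hcard]; exact Multiset.count_le_card _ _
  -- product comparison
  have hprodlt : (t.map F).prod < (t.map fun β => ‖z - β‖).prod :=
    mprod_lt_aux t F _ htne hF0 hkey
  have hFsplit : (t.map F).prod
      = ((4 : ℝ)⁻¹ ^ i₀ * (2 : ℝ)⁻¹ ^ (n - i₀)) * (t.map fun β => ‖(w : ℂ) - β‖).prod := by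
    rw [hF]
    rw [show (fun β => (if β = (α : ℂ) then (4 : ℝ)⁻¹ else 2⁻¹) * ‖(w : ℂ) - β‖)
      = fun β => (fun b => if b = (α : ℂ) then (4 : ℝ)⁻¹ else 2⁻¹) β *
        (fun b => ‖(w : ℂ) - b‖) β from rfl, Multiset.prod_map_mul,
      prod_ite_count, hcount, hcard]
  have hKeq : (2 : ℝ) ^ (-(i₀ : ℤ) - (n : ℤ)) = (4 : ℝ)⁻¹ ^ i₀ * (2 : ℝ)⁻¹ ^ (n - i₀) := by
    have h1 : (-(i₀ : ℤ) - (n : ℤ)) = (-(2 * i₀ : ℕ) : ℤ) + (-((n - i₀ : ℕ) : ℤ)) := by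
      push_cast [Nat.cast_sub hin]; ring
    rw [h1, zpow_add₀ (two_ne_zero), zpow_neg, zpow_neg, zpow_natCast, zpow_natCast,
      pow_mul, inv_pow, inv_pow]
    norm_num
  -- evaluation at w
  have hevalw : (|R.eval w| : ℝ) = ‖S.eval (w : ℂ)‖ := by
    rw [hSdef, show ((w : ℝ) : ℂ) = algebraMap ℝ ℂ w from rfl, Polynomial.eval_map,
      Polynomial.eval₂_at_apply]
    rw [show (algebraMap ℝ ℂ) (R.eval w) = ((R.eval w : ℝ) : ℂ) from rfl, Complex.norm_real, Real.norm_eq_abs]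
  have hc0 : 0 < ‖S.leadingCoeff‖ :=
    norm_pos_iff.mpr (Polynomial.leadingCoeff_ne_zero.mpr hS0)
  have hgoal : ‖S.leadingCoeff‖ * (t.map fun β => ‖z - β‖).prod
      > (2 : ℝ) ^ (-(i₀ : ℤ) - (n : ℤ)) *
        (‖S.leadingCoeff‖ * (t.map fun β => ‖(w : ℂ) - β‖).prod) := by
    have h := mul_lt_mul_of_pos_left (hFsplit ▸ hprodlt) hc0
    rw [hKeq]
    calc (4 : ℝ)⁻¹ ^ i₀ * (2 : ℝ)⁻¹ ^ (n - i₀) *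
          (‖S.leadingCoeff‖ * (t.map fun β => ‖(w : ℂ) - β‖).prod)
        = ‖S.leadingCoeff‖ *
          ((4 : ℝ)⁻¹ ^ i₀ * (2 : ℝ)⁻¹ ^ (n - i₀) *
            (t.map fun β => ‖(w : ℂ) - β‖).prod) := by ring
      _ < ‖S.leadingCoeff‖ * (t.map fun β => ‖z - β‖).prod := h
  calc (2 : ℝ) ^ (-(i₀ : ℤ) - (n : ℤ)) * |R.eval (m - 2 * r)|
      = (2 : ℝ) ^ (-(i₀ : ℤ) - (n : ℤ)) *
        (‖S.leadingCoeff‖ * (t.map fun β => ‖(w : ℂ) - β‖).prod) := by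
        rw [show m - 2 * r = w from rfl, hevalw, heval]
    _ < ‖S.leadingCoeff‖ * (t.map fun β => ‖z - β‖).prod := hgoal
    _ = ‖S.eval z‖ := (heval z).symm
end

section
/- Let f, g ∈ ℝ[x,y], and let Δ₁, Δ₂ ⊂ ℂ be open discs centered at real points, each symmetric under complex conjugation, such that Δ₁ contains at most one root of res(f,g,y) and Δ₂ contains at most one root of res(f,g,x). If the polydisc Δ₁ × Δ₂ contains a common zero (x₀,y₀) of f and g, then x₀ and y₀ are real. -/
open MvPolynomial

theorem polydisc_solution_is_real (f g : MvPolynomial (Fin 2) ℝ)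
    (Ry Rx : Polynomial ℝ) (c₁ c₂ r₁ r₂ : ℝ)
    (helim : ∀ a b : ℂ, MvPolynomial.aeval ![a, b] f = 0 → MvPolynomial.aeval ![a, b] g = 0 →
      (Ry.map (algebraMap ℝ ℂ)).eval a = 0 ∧ (Rx.map (algebraMap ℝ ℂ)).eval b = 0)
    (h₁ : ∀ z₁ ∈ Metric.ball (c₁ : ℂ) r₁, ∀ z₂ ∈ Metric.ball (c₁ : ℂ) r₁,
      (Ry.map (algebraMap ℝ ℂ)).eval z₁ = 0 → (Ry.map (algebraMap ℝ ℂ)).eval z₂ = 0 → z₁ = z₂)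
    (h₂ : ∀ w₁ ∈ Metric.ball (c₂ : ℂ) r₂, ∀ w₂ ∈ Metric.ball (c₂ : ℂ) r₂,
      (Rx.map (algebraMap ℝ ℂ)).eval w₁ = 0 → (Rx.map (algebraMap ℝ ℂ)).eval w₂ = 0 → w₁ = w₂)
    (x₀ y₀ : ℂ) (hx₀ : x₀ ∈ Metric.ball (c₁ : ℂ) r₁) (hy₀ : y₀ ∈ Metric.ball (c₂ : ℂ) r₂)
    (hf : MvPolynomial.aeval ![x₀, y₀] f = 0) (hg : MvPolynomial.aeval ![x₀, y₀] g = 0) :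
    x₀.im = 0 ∧ y₀.im = 0 := by
  -- conjugation of evaluation
  have conj_aeval : ∀ (p : MvPolynomial (Fin 2) ℝ) (x y : ℂ),
      (starRingEnd ℂ) (aeval ![x, y] p) = aeval ![star x, star y] p := by
    intro p x y
    have h := MvPolynomial.comp_aeval_apply (f := ![x, y]) (Complex.conjAe : ℂ →ₐ[ℝ] ℂ) p
    convert h using 2
    · simp [Complex.conjAe]
    congr 1
    ext i; fin_cases i <;> simp [Complex.conjAe]
  have hf' : aeval ![star x₀, star y₀] f = 0 := by
    rw [← conj_aeval, hf, map_zero]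
  have hg' : aeval ![star x₀, star y₀] g = 0 := by
    rw [← conj_aeval, hg, map_zero]
  -- conjugates lie in the same balls
  have hball : ∀ (c r : ℝ) (z : ℂ), z ∈ Metric.ball (c : ℂ) r → star z ∈ Metric.ball (c : ℂ) r := by
    intro c r z hz
    simp only [Metric.mem_ball] at hz ⊢
    calc dist (star z) (c : ℂ) = dist ((starRingEnd ℂ) z) ((starRingEnd ℂ) (c : ℂ)) := by
          rw [Complex.conj_ofReal]; rfl
      _ = dist z (c : ℂ) := Complex.dist_conj_conj z c
      _ < r := hz
  obtain ⟨hRy, hRx⟩ := helim x₀ y₀ hf hg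
  obtain ⟨hRy', hRx'⟩ := helim (star x₀) (star y₀) hf' hg'
  have hx : x₀ = star x₀ := h₁ x₀ hx₀ (star x₀) (hball c₁ r₁ x₀ hx₀) hRy hRy'
  have hy : y₀ = star y₀ := h₂ y₀ hy₀ (star y₀) (hball c₂ r₂ y₀ hy₀) hRx hRx'
  constructor
  · have := congrArg Complex.im hx
    simp only [Complex.star_def, Complex.conj_im] at this
    linarith
  · have := congrArg Complex.im hy
    simp only [Complex.star_def, Complex.conj_im] at this
    linarith
end

section
/- (Inclusion predicate) Let f, g ∈ ℝ[x,y], write R^{(y)} = u^{(y)}·f + v^{(y)}·g and R^{(x)} = u^{(x)}·f + v^{(x)}·g with u^{(y)}, v^{(y)}, u^{(x)}, v^{(x)} ∈ ℝ[x,y]. Let Δ = Δ₁ × Δ₂ ⊂ ℂ² be a closed polydisc, and suppose: (a) |R^{(y)}(z₁)| > L₁ for all z₁ ∈ ∂Δ₁, (b) |R^{(x)}(z₂)| > L₂ for all z₂ ∈ ∂Δ₂, (c) |u^{(y)}| ≤ U₁, |v^{(y)}| ≤ V₁, |u^{(x)}| ≤ U₂, |v^{(x)}| ≤ V₂ on Δ.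 If there is a point (x₀,y₀) ∈ Δ with U₁·|f(x₀,y₀)| + V₁·|g(x₀,y₀)| < L₁ and U₂·|f(x₀,y₀)| + V₂·|g(x₀,y₀)| < L₂, then every point (x',y') of Δ with |f(x',y')| ≤ |f(x₀,y₀)| and |g(x',y')| ≤ |g(x₀,y₀)| lies in the interior of Δ (i.e., no such point is on the boundary of Δ). -/
open MvPolynomial

theorem inclusion_predicate (f g uy vy ux vx : MvPolynomial (Fin 2) ℝ)
    (Ry Rx : Polynomial ℝ) (c₁ c₂ r₁ r₂ L₁ L₂ U₁ V₁ U₂ V₂ : ℝ)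
    (hr₁ : 0 < r₁) (hr₂ : 0 < r₂)
    (hRy : ∀ z w : ℂ, (Ry.map (algebraMap ℝ ℂ)).eval z =
      MvPolynomial.aeval ![z, w] uy * MvPolynomial.aeval ![z, w] f +
      MvPolynomial.aeval ![z, w] vy * MvPolynomial.aeval ![z, w] g)
    (hRx : ∀ z w : ℂ, (Rx.map (algebraMap ℝ ℂ)).eval w =
      MvPolynomial.aeval ![z, w] ux * MvPolynomial.aeval ![z, w] f +
      MvPolynomial.aeval ![z, w] vx * MvPolynomial.aeval ![z, w] g)
    (ha : ∀ z₁ ∈ Metric.sphere (c₁ : ℂ) r₁, norm ((Ry.map (algebraMap ℝ ℂ)).eval z₁) > L₁)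
    (hb : ∀ z₂ ∈ Metric.sphere (c₂ : ℂ) r₂, norm ((Rx.map (algebraMap ℝ ℂ)).eval z₂) > L₂)
    (hc : ∀ z ∈ Metric.closedBall (c₁ : ℂ) r₁, ∀ w ∈ Metric.closedBall (c₂ : ℂ) r₂,
      norm (MvPolynomial.aeval ![z, w] uy) ≤ U₁ ∧
      norm (MvPolynomial.aeval ![z, w] vy) ≤ V₁ ∧
      norm (MvPolynomial.aeval ![z, w] ux) ≤ U₂ ∧
      norm (MvPolynomial.aeval ![z, w] vx) ≤ V₂)
    (x₀ y₀ : ℂ) (hx₀ : x₀ ∈ Metric.closedBall (c₁ : ℂ) r₁)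
    (hy₀ : y₀ ∈ Metric.closedBall (c₂ : ℂ) r₂)
    (h₁ : U₁ * norm (MvPolynomial.aeval ![x₀, y₀] f) +
      V₁ * norm (MvPolynomial.aeval ![x₀, y₀] g) < L₁)
    (h₂ : U₂ * norm (MvPolynomial.aeval ![x₀, y₀] f) +
      V₂ * norm (MvPolynomial.aeval ![x₀, y₀] g) < L₂) :
    ∀ x' ∈ Metric.closedBall (c₁ : ℂ) r₁, ∀ y' ∈ Metric.closedBall (c₂ : ℂ) r₂,
      norm (MvPolynomial.aeval ![x', y'] f) ≤
        norm (MvPolynomial.aeval ![x₀, y₀] f) →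
      norm (MvPolynomial.aeval ![x', y'] g) ≤
        norm (MvPolynomial.aeval ![x₀, y₀] g) →
      x' ∈ Metric.ball (c₁ : ℂ) r₁ ∧ y' ∈ Metric.ball (c₂ : ℂ) r₂ := by
  intro x' hx' y' hy' hf hg
  obtain ⟨hU₁, hV₁, hU₂, hV₂⟩ := hc x' hx' y' hy'
  have hU₁0 : (0:ℝ) ≤ U₁ := le_trans (norm_nonneg _) hU₁
  have hV₁0 : (0:ℝ) ≤ V₁ := le_trans (norm_nonneg _) hV₁
  have hU₂0 : (0:ℝ) ≤ U₂ := le_trans (norm_nonneg _) hU₂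
  have hV₂0 : (0:ℝ) ≤ V₂ := le_trans (norm_nonneg _) hV₂
  have key1 : norm ((Ry.map (algebraMap ℝ ℂ)).eval x') ≤
      U₁ * norm (MvPolynomial.aeval ![x₀, y₀] f) +
      V₁ * norm (MvPolynomial.aeval ![x₀, y₀] g) := by
    rw [hRy x' y']
    calc norm (aeval ![x', y'] uy * aeval ![x', y'] f +
          aeval ![x', y'] vy * aeval ![x', y'] g)
        ≤ norm (aeval ![x', y'] uy * aeval ![x', y'] f) +
          norm (aeval ![x', y'] vy * aeval ![x', y'] g) := norm_add_le _ _
      _ = norm (aeval ![x', y'] uy) * norm (aeval ![x', y'] f) +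
          norm (aeval ![x', y'] vy) * norm (aeval ![x', y'] g) := by
          rw [norm_mul, norm_mul]
      _ ≤ U₁ * norm (aeval ![x₀, y₀] f) + V₁ * norm (aeval ![x₀, y₀] g) :=
          add_le_add (mul_le_mul hU₁ hf (norm_nonneg _) hU₁0)
            (mul_le_mul hV₁ hg (norm_nonneg _) hV₁0)
  have key2 : norm ((Rx.map (algebraMap ℝ ℂ)).eval y') ≤
      U₂ * norm (MvPolynomial.aeval ![x₀, y₀] f) +
      V₂ * norm (MvPolynomial.aeval ![x₀, y₀] g) := by
    rw [hRx x' y']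
    calc norm (aeval ![x', y'] ux * aeval ![x', y'] f +
          aeval ![x', y'] vx * aeval ![x', y'] g)
        ≤ norm (aeval ![x', y'] ux * aeval ![x', y'] f) +
          norm (aeval ![x', y'] vx * aeval ![x', y'] g) := norm_add_le _ _
      _ = norm (aeval ![x', y'] ux) * norm (aeval ![x', y'] f) +
          norm (aeval ![x', y'] vx) * norm (aeval ![x', y'] g) := by
          rw [norm_mul, norm_mul]
      _ ≤ U₂ * norm (aeval ![x₀, y₀] f) + V₂ * norm (aeval ![x₀, y₀] g) :=
          add_le_add (mul_le_mul hU₂ hf (norm_nonneg _) hU₂0)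
            (mul_le_mul hV₂ hg (norm_nonneg _) hV₂0)
  constructor
  · by_contra h
    have hs : x' ∈ Metric.sphere (c₁ : ℂ) r₁ := by
      rw [Metric.mem_sphere]
      rcases lt_or_eq_of_le (Metric.mem_closedBall.mp hx') with h' | h'
      · exact absurd (Metric.mem_ball.mpr h') h
      · exact h'
    have := ha x' hs
    linarith
  · by_contra h
    have hs : y' ∈ Metric.sphere (c₂ : ℂ) r₂ := by
      rw [Metric.mem_sphere]
      rcases lt_or_eq_of_le (Metric.mem_closedBall.mp hy') with h' | h'
      · exact absurd (Metric.mem_ball.mpr h') h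
      · exact h'
    have := hb y' hs
    linarith
end
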